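/- Fix integers e ∈ ℤ and m ∈ ℕ, m ≥ 1. For every dyadic interval R in ℝ, the number of dyadic intervals S satisfying |R| = 2^e |S| and m ≤ diam(R ∪ S)/max(|R|,|S|) < m + 1 is at most C·2^{max(e,0)} for an absolute constant C. -/

import Mathlib

open Real

structure DyadicI where
  j : ℤ
  k : ℤ

namespace DyadicI

/-- The length `2^j` of a dyadic interval. -/
noncomputable def len (I : DyadicI) : ℝ := (2 : ℝ) ^ I.j

/-- The underlying set `[k·2^j, (k+1)·2^j)` of a dyadic interval. -/
def toSet (I : DyadicI) : Set ℝ :=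
  Set.Ico ((I.k : ℝ) * (2 : ℝ) ^ I.j) (((I.k : ℝ) + 1) * (2 : ℝ) ^ I.j)

/-- The center of a dyadic interval. -/
noncomputable def center (I : DyadicI) : ℝ := ((I.k : ℝ) + 1/2) * (2 : ℝ) ^ I.j

/-- The diameter of the union of two dyadic intervals. -/
noncomputable def diamUnion (I J : DyadicI) : ℝ :=
  max (((I.k : ℝ) + 1) * (2 : ℝ) ^ I.j) (((J.k : ℝ) + 1) * (2 : ℝ) ^ J.j)
    - min ((I.k : ℝ) * (2 : ℝ) ^ I.j) ((J.k : ℝ) * (2 : ℝ) ^ J.j)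

end DyadicI

instance : DecidableEq DyadicI := fun a b =>
  decidable_of_iff (a.j = b.j ∧ a.k = b.k) (by cases a; cases b; simp)

set_option maxHeartbeats 2000000 in
/-- for fixed eccentricity `e` and relative distance `m ≥ 1`, the number of dyadic
intervals `S` with `|R| = 2^e|S|` and `m ≤ diam(R∪S)/max(|R|,|S|) < m+1` is at most
`C·2^{max(e,0)}`. -/
theorem statement3 :
    ∃ C : ℝ, 0 < C ∧ ∀ (e : ℤ) (m : ℕ), 1 ≤ m → ∀ R : DyadicI,
      {S : DyadicI | R.len = (2 : ℝ) ^ e * S.len ∧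
          (m : ℝ) ≤ R.diamUnion S / max R.len S.len ∧
          R.diamUnion S / max R.len S.len < (m : ℝ) + 1}.Finite ∧
      ({S : DyadicI | R.len = (2 : ℝ) ^ e * S.len ∧
          (m : ℝ) ≤ R.diamUnion S / max R.len S.len ∧
          R.diamUnion S / max R.len S.len < (m : ℝ) + 1}.ncard : ℝ) ≤
        C * (2 : ℝ) ^ (max e 0) := by
  refine ⟨4, by norm_num, fun e m hm R => ?_⟩
  set j : ℤ := R.j - e with hj
  set s : ℝ := (2:ℝ)^j with hs
  set a : ℝ := (R.k : ℝ) * (2:ℝ)^R.j with ha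
  set b : ℝ := ((R.k : ℝ)+1) * (2:ℝ)^R.j with hb
  set M : ℝ := max ((2:ℝ)^R.j) s with hM
  set N : ℤ := 2 ^ (max e 0).toNat with hN
  have hs0 : (0:ℝ) < s := zpow_pos (by norm_num) _
  have hr0 : (0:ℝ) < (2:ℝ)^R.j := zpow_pos (by norm_num) _
  have hM0 : (0:ℝ) < M := lt_max_iff.mpr (Or.inr hs0)
  have hNr : ((N:ℝ)) = (2:ℝ) ^ (max e 0) := by
    rw [hN]; push_cast
    rw [← zpow_natCast (2:ℝ), Int.toNat_of_nonneg (le_max_right e 0)]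
  have hMs : M = s * (N:ℝ) := by
    rw [hM, hNr, hs, ← zpow_add₀ (by norm_num : (2:ℝ) ≠ 0)]
    have hmax : max ((2:ℝ)^R.j) ((2:ℝ)^j) = (2:ℝ)^(max R.j j) :=
      (Monotone.map_max (fun x y h => by gcongr; norm_num)).symm
    rw [hmax]
    congr 1
    omega
  have hba : b - a = (2:ℝ)^R.j := by rw [ha, hb]; ring
  have hbaM : b - a ≤ M := by rw [hba, hM]; exact le_max_left _ _
  have hsM : s ≤ M := le_max_right _ _
  set α : ℝ := (a + ((m:ℝ)-1)*M)/s - 1 with hα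
  set β : ℝ := (b - ((m:ℝ)+1)*M)/s with hβ
  set F : Finset ℤ :=
    Finset.Icc ⌈α⌉ (⌈α⌉ + 2*N - 1) ∪ Finset.Icc (⌊β⌋+1) (⌊β⌋ + 2*N) with hF
  have hsub : {S : DyadicI | R.len = (2 : ℝ) ^ e * S.len ∧
          (m : ℝ) ≤ R.diamUnion S / max R.len S.len ∧
          R.diamUnion S / max R.len S.len < (m : ℝ) + 1} ⊆
      ↑(F.image (fun k => DyadicI.mk j k)) := by
    rintro S ⟨h1, h2, h3⟩
    have hSj : S.j = j := by
      have h2j : (2:ℝ)^R.j = (2:ℝ)^(e + S.j) := by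
        rw [zpow_add₀ (by norm_num : (2:ℝ) ≠ 0)]; exact h1
      have := zpow_right_injective₀ (by norm_num : (0:ℝ) < 2) (by norm_num) h2j
      omega
    set k : ℤ := S.k with hk
    have hmaxlen : max R.len S.len = M := by
      rw [hM]; simp only [DyadicI.len, hSj, hs]
    have hD : R.diamUnion S = max b (((k:ℝ)+1)*s) - min a ((k:ℝ)*s) := by
      rw [hb, ha, hs, hk]
      simp only [DyadicI.diamUnion, hSj]
    rw [hmaxlen, hD] at h2 h3
    set u : ℝ := ((k:ℝ)+1)*s with hu
    set v : ℝ := (k:ℝ)*s with hv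
    have huv : u = v + s := by rw [hu, hv]; ring
    have hm2 : (m:ℝ)*M ≤ max b u - min a v := (le_div_iff₀ hM0).mp h2
    have hm3 : max b u - min a v < ((m:ℝ)+1)*M := by
      have := (div_lt_iff₀ hM0).mp h3; linarith
    have hua : u - a ≤ max b u - min a v :=
      sub_le_sub (le_max_right _ _) (min_le_left _ _)
    have hbv : b - v ≤ max b u - min a v :=
      sub_le_sub (le_max_left _ _) (min_le_right _ _)
    have claim : ((m:ℝ)-1)*M ≤ u - a ∨ ((m:ℝ)-1)*M ≤ b - v := by
      rcases le_total b u with hbu | hbu <;> rcases le_total a v with hav | hav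
      · left
        rw [max_eq_right hbu, min_eq_left hav] at hm2
        nlinarith
      · left
        rw [max_eq_right hbu, min_eq_right hav] at hm2
        have hms : (m:ℝ)*M ≤ s := by rw [huv] at hm2; linarith
        have h0 : ((m:ℝ)-1)*M ≤ 0 := by linarith
        have hau : a ≤ u := le_trans (by linarith) hbu
        linarith
      · left
        rw [max_eq_left hbu, min_eq_left hav] at hm2
        have h0 : ((m:ℝ)-1)*M ≤ 0 := by linarith
        have hau : a ≤ u := by rw [huv]; linarith
        linarith
      · right
        rw [max_eq_left hbu, min_eq_right hav] at hm2
        nlinarith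
    have hkF : k ∈ F := by
      rw [hF, Finset.mem_union, Finset.mem_Icc, Finset.mem_Icc]
      rcases claim with hc | hc
      · left
        have hle : α ≤ (k:ℝ) := by
          rw [hα, sub_le_iff_le_add, div_le_iff₀ hs0]
          rw [hu] at hc; nlinarith
        have hceil : ⌈α⌉ ≤ k := Int.ceil_le.mpr hle
        refine ⟨hceil, ?_⟩
        have h4 : u - a < ((m:ℝ)+1)*M := lt_of_le_of_lt hua hm3
        have hlt : (k:ℝ) < α + 2*(N:ℝ) := by
          rw [hα, show (a + ((m:ℝ)-1)*M)/s - 1 + 2*(N:ℝ)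
              = (a + ((m:ℝ)-1)*M + 2*(N:ℝ)*s)/s - 1 from by field_simp; ring,
            lt_sub_iff_add_lt, lt_div_iff₀ hs0]
          rw [hu] at h4
          rw [hMs] at h4 ⊢
          nlinarith
        have hlt2 : (k:ℝ) < (⌈α⌉:ℝ) + 2*(N:ℝ) :=
          lt_of_lt_of_le hlt (by linarith [Int.le_ceil α])
        have : k < ⌈α⌉ + 2*N := by exact_mod_cast hlt2
        omega
      · right
        have h5 : b - v < ((m:ℝ)+1)*M := lt_of_le_of_lt hbv hm3
        have hlt : β < (k:ℝ) := by
          rw [hβ, div_lt_iff₀ hs0]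
          rw [hv] at h5; linarith
        have hfl : ⌊β⌋ < k := Int.floor_lt.mpr hlt
        refine ⟨by omega, ?_⟩
        have hle : (k:ℝ) ≤ β + 2*(N:ℝ) := by
          rw [hβ, show (b - ((m:ℝ)+1)*M)/s + 2*(N:ℝ)
              = (b - ((m:ℝ)+1)*M + 2*(N:ℝ)*s)/s from by field_simp,
            le_div_iff₀ hs0]
          rw [hv] at hc
          rw [hMs] at hc ⊢
          nlinarith
        have hle2 : ((k - 2*N : ℤ):ℝ) ≤ β := by push_cast; linarith
        have := Int.le_floor.mpr hle2
        omega
    refine Finset.mem_coe.mpr (Finset.mem_image.mpr ⟨k, hkF, ?_⟩)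
    rw [← hSj]
  have hfin := Set.Finite.subset (Finset.finite_toSet _) hsub
  refine ⟨hfin, ?_⟩
  have hcard : {S : DyadicI | R.len = (2 : ℝ) ^ e * S.len ∧
          (m : ℝ) ≤ R.diamUnion S / max R.len S.len ∧
          R.diamUnion S / max R.len S.len < (m : ℝ) + 1}.ncard ≤
      (F.image (fun k => DyadicI.mk j k)).card := by
    rw [← Set.ncard_coe_finset]
    exact Set.ncard_le_ncard hsub (Finset.finite_toSet _)
  have hFc : (F.image (fun k => DyadicI.mk j k)).card ≤ (2*N).toNat + (2*N).toNat := by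
    calc (F.image (fun k => DyadicI.mk j k)).card ≤ F.card := Finset.card_image_le
    _ ≤ _ := by
        rw [hF]
        refine le_trans (Finset.card_union_le _ _) ?_
        rw [Int.card_Icc, Int.card_Icc]
        omega
  have hN0 : 0 ≤ 2*N := by positivity
  calc ({S : DyadicI | R.len = (2 : ℝ) ^ e * S.len ∧
          (m : ℝ) ≤ R.diamUnion S / max R.len S.len ∧
          R.diamUnion S / max R.len S.len < (m : ℝ) + 1}.ncard : ℝ)
      ≤ (((2*N).toNat + (2*N).toNat : ℕ) : ℝ) := by
        exact_mod_cast le_trans hcard hFc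
    _ = 4 * (N:ℝ) := by
        have h2 : (((2*N).toNat : ℕ) : ℝ) = 2 * (N:ℝ) := by
          rw [← Int.cast_natCast, Int.toNat_of_nonneg hN0]; push_cast; ring
        rw [Nat.cast_add, h2]; ring
    _ ≤ 4 * (2:ℝ)^(max e 0) := le_of_eq (by rw [hNr])
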